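/- Suppose ϑ ∈ I is an invariant state, i.e., the unique fluid model solution ζ with initial measure ϑ satisfies ζ(t) = ϑ for all t ≥ 0. Then w_l ≤ w_ϑ ≤ w_u and ϑ = θ^{w_ϑ}. -/

import Mathlib

open MeasureTheory Set Filter Topology
open scoped ENNReal

noncomputable section

namespace OverloadedFIFO

/-- The complement `G(x) = Γ((x, ∞))` of the cumulative distribution function of `Γ`. -/
def Gk (Γ : MeasureTheory.Measure ℝ) (x : ℝ) : ℝ := (Γ (Set.Ioi x)).toReal

/-- Model data: `K` job classes with arrival rates `lam`, service rates `mu`, and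
deadline (patience) distributions `Γ`, in the overloaded regime `ρ > 1`.  Each `Γ k` is a
Borel probability measure on `[0,∞)` (no mass on negatives), with continuous c.d.f.
(no atoms, in particular `Γ k {0} = 0`) and finite mean. -/
structure Data (K : ℕ) where
  lam : Fin K → ℝ
  mu : Fin K → ℝ
  Γ : Fin K → MeasureTheory.Measure ℝ
  lam_pos : ∀ k, 0 < lam k
  mu_pos : ∀ k, 0 < mu k
  Γ_prob : ∀ k, MeasureTheory.IsProbabilityMeasure (Γ k)
  Γ_null_neg : ∀ k, Γ k (Set.Iio 0) = 0
  Γ_noAtom : ∀ k, ∀ x : ℝ, Γ k {x} = 0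
  Γ_finite_mean : ∀ k, MeasureTheory.Integrable id (Γ k)
  rho_gt_one : 1 < ∑ k, lam k / mu k

instance {K : ℕ} (D : Data K) (k : Fin K) : IsProbabilityMeasure (D.Γ k) := D.Γ_prob k

/-- `ρ_k = λ_k / μ_k`. -/
def Data.rho {K : ℕ} (D : Data K) (k : Fin K) : ℝ := D.lam k / D.mu k

/-- `ρ = Σ_k ρ_k`. -/
def Data.rhoTot {K : ℕ} (D : Data K) : ℝ := ∑ k, D.rho k

/-- A workload fluid model solution: a nonnegative function `w` on `[0,∞)` satisfying
`w(t) = w(0) + Σ_k ρ_k ∫_0^t G_k(w(s)) ds − t` for all `t ≥ 0`. -/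
def IsWorkloadSol {K : ℕ} (D : Data K) (w : ℝ → ℝ) : Prop :=
  (∀ t : ℝ, 0 ≤ t → 0 ≤ w t) ∧
  (∀ k : Fin K, ∀ t : ℝ, 0 ≤ t →
    IntervalIntegrable (fun s => Gk (D.Γ k) (w s)) volume 0 t) ∧
  (∀ t : ℝ, 0 ≤ t →
    w t = w 0 + (∑ k, D.rho k * ∫ s in (0:ℝ)..t, Gk (D.Γ k) (w s)) - t)

/-- `w_l = sup {u ≥ 0 : Σ_k ρ_k G_k(u) > 1}`. -/
def wl {K : ℕ} (D : Data K) : ℝ :=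
  sSup {u : ℝ | 0 ≤ u ∧ 1 < ∑ k, D.rho k * Gk (D.Γ k) u}

/-- `w_u = sup {u ≥ 0 : Σ_k ρ_k G_k(u) ≥ 1}`. -/
def wu {K : ℕ} (D : Data K) : ℝ :=
  sSup {u : ℝ | 0 ≤ u ∧ 1 ≤ ∑ k, D.rho k * Gk (D.Γ k) u}

/-- `d_max = max_k sup {x ≥ 0 : G_k(x) > 0} ∈ (0,∞]`, as an extended nonnegative real. -/
def dmax {K : ℕ} (D : Data K) : ℝ≥0∞ :=
  ⨆ k, sSup (ENNReal.ofReal '' {x : ℝ | 0 ≤ x ∧ 0 < Gk (D.Γ k) x})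

/-- `τ(t) = inf {s ∈ [0,t] : w(s) + s ≥ t}`. -/
def tauF (w : ℝ → ℝ) (t : ℝ) : ℝ := sInf {s : ℝ | 0 ≤ s ∧ s ≤ t ∧ t ≤ w s + s}

/-- The nonnegative quadrant `[0,∞)²`. -/
def Q : Set (ℝ × ℝ) := {p | 0 ≤ p.1 ∧ 0 ≤ p.2}

/-- The shift `B_x = {y ∈ [0,∞)² : y − x ∈ B}` of a set `B ⊆ [0,∞)²`. -/
def shift (B : Set (ℝ × ℝ)) (x : ℝ × ℝ) : Set (ℝ × ℝ) :=
  {y | y ∈ Q ∧ (y.1 - x.1, y.2 - x.2) ∈ B}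

/-- Diagonal shift `B_t = B_{(t,t)}`. -/
def shiftd (B : Set (ℝ × ℝ)) (t : ℝ) : Set (ℝ × ℝ) := shift B (t, t)

/-- The set `C = ([0,∞)×{0}) ∪ ({0}×[0,∞))`. -/
def Cset : Set (ℝ × ℝ) := {p | (0 ≤ p.1 ∧ p.2 = 0) ∨ (p.1 = 0 ∧ 0 ≤ p.2)}

/-- The `κ`-enlargement `B^κ = {x ∈ [0,∞)² : inf_{y ∈ B} ‖x−y‖ < κ}` (Euclidean norm). -/
def enlarge (B : Set (ℝ × ℝ)) (κ : ℝ) : Set (ℝ × ℝ) :=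
  {x | x ∈ Q ∧ ∃ y ∈ B, Real.sqrt ((x.1 - y.1) ^ 2 + (x.2 - y.2) ^ 2) < κ}

/-- `w_ϑ = sup {x ≥ 0 : ϑ_+([x,∞)×[0,∞)) > 0}` for a `K`-tuple `ϑ` of measures on `[0,∞)²`. -/
def wMeas {K : ℕ} (ϑ : Fin K → MeasureTheory.Measure (ℝ × ℝ)) : ℝ :=
  sSup {x : ℝ | 0 ≤ x ∧ 0 < ∑ k, ϑ k (Set.Ici x ×ˢ Set.Ici (0:ℝ))}

/-- Membership in the set `I` of admissible initial measures: each `ϑ k` is a finite Borel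
measure on `[0,∞)²`; (I.1) the superposition charges no corner set `C_x`, `x ∈ [0,∞)²`;
(I.2) `w_ϑ < ∞`; (I.3) `max_k G_k(w_ϑ − ε) > 0` for every `ε > 0`. -/
def MemI {K : ℕ} (D : Data K) (ϑ : Fin K → MeasureTheory.Measure (ℝ × ℝ)) : Prop :=
  (∀ k, IsFiniteMeasure (ϑ k)) ∧
  (∀ k, ϑ k Qᶜ = 0) ∧
  (∀ x ∈ Q, (∑ k, ϑ k (shift Cset x)) = 0) ∧
  BddAbove {x : ℝ | 0 ≤ x ∧ 0 < ∑ k, ϑ k (Set.Ici x ×ˢ Set.Ici (0:ℝ))} ∧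
  (∀ ε : ℝ, 0 < ε → ∃ k, 0 < Gk (D.Γ k) (wMeas ϑ - ε))

/-- `δ⁺_w`: the Dirac measure at `w` if `w > 0`, and the zero measure otherwise. -/
def deltaPlus (w : ℝ) : MeasureTheory.Measure ℝ :=
  if 0 < w then MeasureTheory.Measure.dirac w else 0

instance (w : ℝ) : SFinite (deltaPlus w) := by
  unfold deltaPlus; split_ifs <;> infer_instance

/-- `(δ⁺_w × Γ)(B)`, as a real number. -/
def kern (Γ : MeasureTheory.Measure ℝ) (w : ℝ) (B : Set (ℝ × ℝ)) : ℝ :=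
  (((deltaPlus w).prod Γ) B).toReal

/-- A (measure-valued) fluid model solution with initial measure `ϑ`: a family
`ζ(t) = (ζ_1(t),…,ζ_K(t))` of finite Borel measures on `[0,∞)²` with `ζ(0) = ϑ` satisfying
`ζ_k(t)(B) = ϑ_k(B_t) + λ_k ∫_0^t (δ⁺_{w(s)} × Γ_k)(B_{t−s}) ds` for every Borel
`B ⊆ [0,∞)²` and `t ≥ 0`, where `w` is the (unique) workload fluid model solution with
`w(0) = w_ϑ`. -/
def IsFluidSol {K : ℕ} (D : Data K) (ϑ : Fin K → MeasureTheory.Measure (ℝ × ℝ))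
    (ζ : ℝ → Fin K → MeasureTheory.Measure (ℝ × ℝ)) : Prop :=
  ∃ w : ℝ → ℝ, IsWorkloadSol D w ∧ w 0 = wMeas ϑ ∧
    (∀ t : ℝ, 0 ≤ t → ∀ k, IsFiniteMeasure (ζ t k) ∧ ζ t k Qᶜ = 0) ∧
    (∀ k, ζ 0 k = ϑ k) ∧
    (∀ k, ∀ B : Set (ℝ × ℝ), B ⊆ Q → MeasurableSet B → ∀ t : ℝ, 0 ≤ t →
      IntervalIntegrable (fun s => kern (D.Γ k) (w s) (shiftd B (t - s))) volume 0 t ∧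
      ζ t k B = ϑ k (shiftd B t) +
        ENNReal.ofReal (D.lam k * ∫ s in (0:ℝ)..t, kern (D.Γ k) (w s) (shiftd B (t - s))))

/-- The candidate invariant state `θ^w`:
`θ^w_k(B) = λ_k ∫_0^w Γ_k({p ≥ u : (w−u, p−u) ∈ B}) du`. -/
def thetaW {K : ℕ} (D : Data K) (w : ℝ) (k : Fin K) : MeasureTheory.Measure (ℝ × ℝ) :=
  ENNReal.ofReal (D.lam k) •
    MeasureTheory.Measure.map (fun up : ℝ × ℝ => (w - up.1, up.2 - up.1))
      ((((MeasureTheory.volume.restrict (Set.Ioo (0:ℝ) w))).prod (D.Γ k)).restrict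
        {up : ℝ × ℝ | up.1 ≤ up.2})

lemma measurableSet_Q : MeasurableSet Q :=
  (measurableSet_le measurable_const measurable_fst).inter
    (measurableSet_le measurable_const measurable_snd)

lemma Gk_nonneg (Γ : Measure ℝ) (x : ℝ) : 0 ≤ Gk Γ x := ENNReal.toReal_nonneg

lemma Gk_anti (Γ : Measure ℝ) [IsFiniteMeasure Γ] {u v : ℝ} (h : u ≤ v) :
    Gk Γ v ≤ Gk Γ u := by
  refine (ENNReal.toReal_le_toReal (measure_ne_top _ _) (measure_ne_top _ _)).mpr ?_
  exact measure_mono (Ioi_subset_Ioi h)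

lemma Gk_zero (Γ : Measure ℝ) [IsProbabilityMeasure Γ] (hneg : Γ (Iio 0) = 0)
    (h0 : Γ {0} = 0) : Gk Γ 0 = 1 := by
  have hIic : Γ (Iic 0) = 0 := by
    have h : Iic (0:ℝ) = Iio 0 ∪ {0} := by ext y; simp [le_iff_lt_or_eq]
    rw [h]
    exact le_antisymm ((measure_union_le _ _).trans (by simp [hneg, h0])) zero_le
  have h1 : Γ (Ioi 0) = 1 := by
    have hc : Ioi (0:ℝ) = (Iic 0)ᶜ := (compl_Iic).symm
    rw [hc, measure_compl measurableSet_Iic (measure_ne_top _ _), hIic, measure_univ]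
    simp
  rw [Gk, h1, ENNReal.toReal_one]

lemma exists_tail_pos (Γ : Measure ℝ) [IsProbabilityMeasure Γ] (hneg : Γ (Iio 0) = 0)
    (h0 : Γ {0} = 0) : ∃ r : ℝ, 0 < r ∧ 0 < Γ (Ioi r) := by
  by_contra hc
  push_neg at hc
  have hall : ∀ r : ℝ, 0 < r → Γ (Ioi r) = 0 := fun r hr => le_antisymm (hc r hr) zero_le
  have hun : Ioi (0:ℝ) = ⋃ n : ℕ, Ioi ((n:ℝ) + 1)⁻¹ := by
    ext y
    simp only [mem_Ioi, mem_iUnion]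
    constructor
    · intro hy
      obtain ⟨n, hn⟩ := exists_nat_gt y⁻¹
      exact ⟨n, by
        rw [inv_lt_comm₀ (by positivity) hy] at *
        calc y⁻¹ < n := hn
        _ ≤ n + 1 := by linarith⟩
    · rintro ⟨n, hn⟩
      exact lt_trans (by positivity) hn
  have : Γ (Ioi 0) = 0 := by
    rw [hun]
    exact measure_iUnion_null fun n => hall _ (by positivity)
  have h1 : Gk Γ 0 = 1 := Gk_zero Γ hneg h0
  rw [Gk, this] at h1
  simp at h1

lemma shiftd_rect {x r : ℝ} (hx : 0 ≤ x) (hr : 0 ≤ r) :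
    shiftd (Ici x ×ˢ Ici (0:ℝ)) r = Ici (x + r) ×ˢ Ici r := by
  ext ⟨y1, y2⟩
  simp only [shiftd, shift, Q, mem_setOf_eq, mem_prod, mem_Ici]
  constructor
  · rintro ⟨⟨h1, h2⟩, h3, h4⟩
    exact ⟨by linarith, by linarith⟩
  · rintro ⟨h1, h2⟩
    exact ⟨⟨by linarith, by linarith⟩, by linarith, by linarith⟩



lemma rho_nonneg {K : ℕ} (D : Data K) (k : Fin K) : 0 ≤ D.rho k :=
  le_of_lt (div_pos (D.lam_pos k) (D.mu_pos k))

lemma wlower {K : ℕ} {D : Data K} {w : ℝ → ℝ} (hw : IsWorkloadSol D w) {r s : ℝ}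
    (hr : 0 ≤ r) (hrs : r ≤ s) : w r - (s - r) ≤ w s := by
  obtain ⟨hnn, hint, heq⟩ := hw
  have hs : 0 ≤ s := hr.trans hrs
  have h1 := heq r hr
  have h2 := heq s hs
  have hsum : ∀ k : Fin K, D.rho k * (∫ u in (0:ℝ)..r, Gk (D.Γ k) (w u)) ≤
      D.rho k * (∫ u in (0:ℝ)..s, Gk (D.Γ k) (w u)) := by
    intro k
    refine mul_le_mul_of_nonneg_left ?_ (rho_nonneg D k)
    have hd := intervalIntegral.integral_interval_sub_left (hint k s hs) (hint k r hr)
    have hnn2 : 0 ≤ ∫ u in r..s, Gk (D.Γ k) (w u) :=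
      intervalIntegral.integral_nonneg hrs (fun u _ => Gk_nonneg _ _)
    linarith
  have := Finset.sum_le_sum (fun k (_ : k ∈ Finset.univ) => hsum k)
  linarith

/-- If `ϑ ∈ I` is an invariant state (the fluid model solution with initial
measure `ϑ` is constant), then `w_l ≤ w_ϑ ≤ w_u` and `ϑ = θ^{w_ϑ}`. -/
theorem invariant_is_thetaW {K : ℕ} (D : Data K)
    (ϑ : Fin K → MeasureTheory.Measure (ℝ × ℝ)) (hϑ : MemI D ϑ)
    (ζ : ℝ → Fin K → MeasureTheory.Measure (ℝ × ℝ)) (hζ : IsFluidSol D ϑ ζ)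
    (hinv : ∀ t : ℝ, 0 ≤ t → ∀ k, ζ t k = ϑ k) :
    wl D ≤ wMeas ϑ ∧ wMeas ϑ ≤ wu D ∧ ∀ k, ϑ k = thetaW D (wMeas ϑ) k := by
  obtain ⟨hfinϑ, hQc, hC, hbdd, hI3⟩ := hϑ
  obtain ⟨w, hw, hw0, hζfin, hζ0, hform⟩ := hζ
  have hW0 : 0 ≤ wMeas ϑ := Real.sSup_nonneg (fun x hx => hx.1)
  -- x above the support sup has zero mass
  have hzero : ∀ x : ℝ, wMeas ϑ < x → ∀ k, ϑ k (Ici x ×ˢ Ici (0:ℝ)) = 0 := by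
    intro x hx k
    by_contra h
    have hk : 0 < ϑ k (Ici x ×ˢ Ici (0:ℝ)) := pos_iff_ne_zero.mpr h
    have hsum : 0 < ∑ j, ϑ j (Ici x ×ˢ Ici (0:ℝ)) :=
      lt_of_lt_of_le hk (Finset.single_le_sum (f := fun j => ϑ j (Ici x ×ˢ Ici (0:ℝ)))
        (fun _ _ => zero_le) (Finset.mem_univ k))
    have hmem : x ∈ {x : ℝ | 0 ≤ x ∧ 0 < ∑ j, ϑ j (Ici x ×ˢ Ici (0:ℝ))} :=
      ⟨le_trans hW0 hx.le, hsum⟩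
    have := le_csSup hbdd hmem
    rw [wMeas] at hx
    linarith
  -- x below the support sup has positive mass
  have hpos : ∀ x : ℝ, 0 ≤ x → x < wMeas ϑ → ∃ k, 0 < ϑ k (Ici x ×ˢ Ici (0:ℝ)) := by
    intro x hx0 hxW
    have hSne : {x : ℝ | 0 ≤ x ∧ 0 < ∑ j, ϑ j (Ici x ×ˢ Ici (0:ℝ))}.Nonempty := by
      by_contra h
      rw [Set.not_nonempty_iff_eq_empty] at h
      rw [wMeas, h, Real.sSup_empty] at hxW
      linarith
    rw [wMeas] at hxW
    obtain ⟨y, ⟨hy0, hy⟩, hxy⟩ := exists_lt_of_lt_csSup hSne hxW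
    have hmono : 0 < ∑ j, ϑ j (Ici x ×ˢ Ici (0:ℝ)) :=
      lt_of_lt_of_le hy (Finset.sum_le_sum fun j _ =>
        measure_mono (prod_mono (Ici_subset_Ici.mpr hxy.le) subset_rfl))
    by_contra hc
    push_neg at hc
    have : ∑ j, ϑ j (Ici x ×ˢ Ici (0:ℝ)) = 0 :=
      Finset.sum_eq_zero fun j _ => le_antisymm (hc j) zero_le
    rw [this] at hmono
    exact lt_irrefl _ hmono
  -- Lemma 1: w never exceeds wMeas ϑ
  have hub : ∀ s0 : ℝ, 0 ≤ s0 → w s0 ≤ wMeas ϑ := by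
    intro s0 hs0
    by_contra hgt
    push_neg at hgt
    set η := w s0 - wMeas ϑ with hη
    have hηpos : 0 < η := by rw [hη]; linarith
    have hK : 0 < K := Nat.pos_of_ne_zero (by
      rintro rfl
      exact absurd D.rho_gt_one (by simp))
    set k0 : Fin K := ⟨0, hK⟩
    obtain ⟨r0, hr0, htail⟩ := exists_tail_pos (D.Γ k0) (D.Γ_null_neg k0) (D.Γ_noAtom k0 0)
    set g : ℝ := (D.Γ k0 (Ioi r0)).toReal with hg
    have hgpos : 0 < g := ENNReal.toReal_pos htail.ne' (measure_ne_top _ _)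
    set ε := min (η / 2) r0 with hε
    have hεpos : 0 < ε := lt_min (by linarith) hr0
    have hεη : ε ≤ η / 2 := min_le_left _ _
    have hεr0 : ε ≤ r0 := min_le_right _ _
    set t := s0 + ε with htdef
    set x := wMeas ϑ + η - ε with hx
    have hxW : wMeas ϑ < x := by rw [hx]; linarith
    have hx0 : 0 ≤ x := le_trans hW0 hxW.le
    set B := Ici x ×ˢ Ici (0:ℝ) with hB
    have hBQ : B ⊆ Q := fun p hp => ⟨le_trans hx0 hp.1, hp.2⟩
    have hBmeas : MeasurableSet B := measurableSet_Ici.prod measurableSet_Ici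
    have ht0 : (0:ℝ) ≤ t := by rw [htdef]; linarith
    obtain ⟨hint, heq⟩ := hform k0 B hBQ hBmeas t ht0
    rw [hinv t ht0 k0] at heq
    have hϑB : ϑ k0 B = 0 := hzero x hxW k0
    have hkernlb : ∀ s ∈ Icc s0 t, g ≤ kern (D.Γ k0) (w s) (shiftd B (t - s)) := by
      intro s hs
      obtain ⟨hs1, hs2⟩ := hs
      have hts : 0 ≤ t - s := by linarith
      have hws : x + (t - s) ≤ w s := by
        have hlow := wlower hw hs0 hs1
        rw [hx, htdef, hη]
        rw [htdef] at hs2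
        linarith
      have hwpos : 0 < w s := lt_of_lt_of_le (by linarith : (0:ℝ) < x + (t - s)) hws
      rw [hB, shiftd_rect hx0 hts, kern, deltaPlus, if_pos hwpos, Measure.prod_prod,
        Measure.dirac_apply_of_mem (show w s ∈ Ici (x + (t - s)) from hws), one_mul]
      refine (ENNReal.toReal_le_toReal (measure_ne_top _ _) (measure_ne_top _ _)).mpr ?_
      refine measure_mono fun q hq => ?_
      have : r0 < q := hq
      have : t - s ≤ r0 := by linarith
      exact le_of_lt (by linarith : t - s < q)
    have hs0t : s0 ≤ t := by rw [htdef]; linarith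
    have hi1 : IntervalIntegrable (fun s => kern (D.Γ k0) (w s) (shiftd B (t - s)))
        volume 0 s0 := by
      refine hint.mono_set ?_
      rw [uIcc_of_le hs0, uIcc_of_le ht0]
      exact Icc_subset_Icc le_rfl hs0t
    have hi2 : IntervalIntegrable (fun s => kern (D.Γ k0) (w s) (shiftd B (t - s)))
        volume s0 t := by
      refine hint.mono_set ?_
      rw [uIcc_of_le hs0t, uIcc_of_le ht0]
      exact Icc_subset_Icc hs0 le_rfl
    have hIlb : ε * g ≤ ∫ s in (0:ℝ)..t, kern (D.Γ k0) (w s) (shiftd B (t - s)) := by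
      rw [← intervalIntegral.integral_add_adjacent_intervals hi1 hi2]
      have h01 : 0 ≤ ∫ s in (0:ℝ)..s0, kern (D.Γ k0) (w s) (shiftd B (t - s)) :=
        intervalIntegral.integral_nonneg hs0 (fun u _ => ENNReal.toReal_nonneg)
      have h02 : ε * g ≤ ∫ s in s0..t, kern (D.Γ k0) (w s) (shiftd B (t - s)) := by
        have hm := intervalIntegral.integral_mono_on hs0t (intervalIntegrable_const (c := g))
          hi2 hkernlb
        rw [intervalIntegral.integral_const, smul_eq_mul] at hm
        have : t - s0 = ε := by rw [htdef]; ring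
        rw [this] at hm
        exact hm
      linarith
    have hofpos : (0:ℝ≥0∞) < ENNReal.ofReal
        (D.lam k0 * ∫ s in (0:ℝ)..t, kern (D.Γ k0) (w s) (shiftd B (t - s))) :=
      ENNReal.ofReal_pos.mpr (mul_pos (D.lam_pos k0)
        (lt_of_lt_of_le (mul_pos hεpos hgpos) hIlb))
    rw [hϑB] at heq
    have hgt0 : (0:ℝ≥0∞) < ϑ k0 (shiftd B t) + ENNReal.ofReal
        (D.lam k0 * ∫ s in (0:ℝ)..t, kern (D.Γ k0) (w s) (shiftd B (t - s))) :=
      lt_of_lt_of_le hofpos le_add_self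
    exact hgt0.ne' heq.symm
  -- Lemma 2: w never dips below wMeas ϑ
  have hlb : ∀ t : ℝ, 0 ≤ t → wMeas ϑ ≤ w t := by
    intro t ht
    rcases eq_or_lt_of_le hW0 with hWz | hWpos
    · rw [← hWz]; exact hw.1 t ht
    by_contra hlt
    push_neg at hlt
    have htne : t ≠ 0 := by
      rintro rfl
      rw [hw0] at hlt
      exact lt_irrefl _ hlt
    have htpos : 0 < t := lt_of_le_of_ne ht (Ne.symm htne)
    set ε := min (min (wMeas ϑ) t) (wMeas ϑ - w t) with hεdef
    have hεW : ε ≤ wMeas ϑ := (min_le_left _ _).trans (min_le_left _ _)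
    have hεt : ε ≤ t := (min_le_left _ _).trans (min_le_right _ _)
    have hεd : ε ≤ wMeas ϑ - w t := min_le_right _ _
    have hεpos : 0 < ε := lt_min (lt_min hWpos htpos) (by linarith)
    set x := wMeas ϑ - ε / 2 with hx
    have hx0 : 0 ≤ x := by rw [hx]; linarith
    have hxW : x < wMeas ϑ := by rw [hx]; linarith
    set B := Ici x ×ˢ Ici (0:ℝ) with hB
    have hBQ : B ⊆ Q := fun p hp => ⟨le_trans hx0 hp.1, hp.2⟩
    have hBmeas : MeasurableSet B := measurableSet_Ici.prod measurableSet_Ici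
    obtain ⟨k, hk⟩ := hpos x hx0 hxW
    obtain ⟨hint, heq⟩ := hform k B hBQ hBmeas t ht
    rw [hinv t ht k] at heq
    have h1 : ϑ k (shiftd B t) = 0 := by
      rw [hB, shiftd_rect hx0 ht]
      refine measure_mono_null ?_ (hzero (x + t) (by rw [hx]; linarith) k)
      exact prod_mono subset_rfl (Ici_subset_Ici.mpr ht)
    rw [h1, zero_add] at heq
    have hex : ∃ s, 0 ≤ s ∧ s ≤ t ∧ x + (t - s) ≤ w s := by
      by_contra hc
      push_neg at hc
      have hzero' : EqOn (fun s => kern (D.Γ k) (w s) (shiftd B (t - s))) 0 (uIcc 0 t) := by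
        intro s hs
        rw [uIcc_of_le ht] at hs
        have hts : 0 ≤ t - s := by linarith [hs.2]
        have hwlt : w s < x + (t - s) := hc s hs.1 hs.2
        show kern (D.Γ k) (w s) (shiftd B (t - s)) = 0
        rw [hB, shiftd_rect hx0 hts, kern, deltaPlus]
        split_ifs with hv
        · rw [Measure.prod_prod, Measure.dirac_apply' _ measurableSet_Ici,
            indicator_of_notMem (by simp only [mem_Ici, not_le]; exact hwlt)]
          simp
        · rw [Measure.prod_prod]
          simp
      have hI0 : ∫ s in (0:ℝ)..t, kern (D.Γ k) (w s) (shiftd B (t - s)) = 0 := by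
        rw [intervalIntegral.integral_congr hzero']
        simp
      rw [hI0, mul_zero, ENNReal.ofReal_zero] at heq
      exact hk.ne' heq
    obtain ⟨s, hsnn, hst, hws⟩ := hex
    have h2 : w s ≤ wMeas ϑ := hub s hsnn
    have h3 : w s - (t - s) ≤ w t := wlower hw hsnn hst
    rw [hx] at hws
    linarith
  have hconst : ∀ t : ℝ, 0 ≤ t → w t = wMeas ϑ := fun t ht =>
    le_antisymm (hub t ht) (hlb t ht)
  -- the fixed-point equation for the total rate
  have hSone : ∑ k, D.rho k * Gk (D.Γ k) (wMeas ϑ) = 1 := by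
    have h := hw.2.2 1 (by norm_num)
    have h1 : w 1 = wMeas ϑ := hconst 1 (by norm_num)
    have h0 : w 0 = wMeas ϑ := by rw [hw0]
    have hI : ∀ k, (∫ s in (0:ℝ)..1, Gk (D.Γ k) (w s)) = Gk (D.Γ k) (wMeas ϑ) := by
      intro k
      have hcg : EqOn (fun s => Gk (D.Γ k) (w s))
          (fun _ => Gk (D.Γ k) (wMeas ϑ)) (uIcc 0 1) := by
        intro s hs
        rw [uIcc_of_le (by norm_num : (0:ℝ) ≤ 1)] at hs
        simp only
        rw [hconst s hs.1]
      rw [intervalIntegral.integral_congr hcg]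
      simp
    have hs : ∑ k, D.rho k * ∫ s in (0:ℝ)..1, Gk (D.Γ k) (w s)
        = ∑ k, D.rho k * Gk (D.Γ k) (wMeas ϑ) :=
      Finset.sum_congr rfl fun k _ => by rw [hI k]
    rw [h1, h0, hs] at h
    linarith
  have hG0 : ∀ k, Gk (D.Γ k) 0 = 1 := fun k => Gk_zero _ (D.Γ_null_neg k) (D.Γ_noAtom k 0)
  have hrho : ∑ k, D.rho k * Gk (D.Γ k) 0 = ∑ k, D.lam k / D.mu k := by
    simp [hG0, Data.rho]
  have hWpos : 0 < wMeas ϑ := by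
    rcases eq_or_lt_of_le hW0 with hWz | hWpos
    · exfalso
      rw [← hWz] at hSone
      rw [hSone] at hrho
      have := D.rho_gt_one
      linarith
    · exact hWpos
  refine ⟨?_, ?_, ?_⟩
  · -- wl ≤ wMeas
    refine csSup_le ⟨0, le_refl 0, ?_⟩ ?_
    · rw [hrho]; exact D.rho_gt_one
    · intro u hu
      obtain ⟨hu0, hu1⟩ := hu
      by_contra hcu
      push_neg at hcu
      have : ∑ k, D.rho k * Gk (D.Γ k) u ≤ ∑ k, D.rho k * Gk (D.Γ k) (wMeas ϑ) :=
        Finset.sum_le_sum fun k _ =>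
          mul_le_mul_of_nonneg_left (Gk_anti _ hcu.le) (rho_nonneg D k)
      rw [hSone] at this
      linarith
  · -- wMeas ≤ wu
    have hbddU : BddAbove {u : ℝ | 0 ≤ u ∧ 1 ≤ ∑ k, D.rho k * Gk (D.Γ k) u} := by
      have hNk : ∀ k : Fin K, ∃ N : ℕ, (D.Γ k (Ioi (N:ℝ))).toReal
          < (2 * ∑ j, D.rho j)⁻¹ := by
        intro k
        have hiI : ⋂ n : ℕ, Ioi ((n:ℝ)) = (∅ : Set ℝ) := by
          ext y
          simp only [mem_iInter, mem_Ioi, mem_empty_iff_false, iff_false, not_forall, not_lt]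
          obtain ⟨n, hn⟩ := exists_nat_gt y
          exact ⟨n, hn.le⟩
        have htend : Tendsto (fun n : ℕ => D.Γ k (Ioi ((n:ℝ)))) atTop (𝓝 0) := by
          have := MeasureTheory.tendsto_measure_iInter_atTop
            (μ := D.Γ k) (s := fun n : ℕ => Ioi ((n:ℝ)))
            (fun n => measurableSet_Ioi.nullMeasurableSet)
            (fun m n hmn => Ioi_subset_Ioi (by exact_mod_cast hmn))
            ⟨0, measure_ne_top _ _⟩
          rw [hiI, measure_empty] at this
          exact this
        have hcpos : (0:ℝ≥0∞) < ENNReal.ofReal (2 * ∑ j, D.rho j)⁻¹ := by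
          refine ENNReal.ofReal_pos.mpr ?_
          have : (1:ℝ) < ∑ j, D.rho j := by
            have := D.rho_gt_one
            simp only [Data.rho]
            linarith
          positivity
        obtain ⟨N, hN⟩ := (htend.eventually_lt_const hcpos).exists
        exact ⟨N, ENNReal.toReal_lt_of_lt_ofReal hN⟩
      choose N hN using hNk
      set u0 : ℝ := ∑ k, (N k : ℝ) with hu0def
      have hu0nn : ∀ k, (N k : ℝ) ≤ u0 :=
        fun k => Finset.single_le_sum (f := fun k => ((N k : ℕ) : ℝ))
          (fun _ _ => Nat.cast_nonneg _) (Finset.mem_univ k)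
      have hsum_lt : ∑ k, D.rho k * Gk (D.Γ k) u0 < 1 := by
        have hR : (1:ℝ) < ∑ j, D.rho j := by
          have := D.rho_gt_one
          simp only [Data.rho]
          linarith
        have hstep : ∀ k : Fin K, D.rho k * Gk (D.Γ k) u0
            ≤ D.rho k * (2 * ∑ j, D.rho j)⁻¹ := by
          intro k
          refine mul_le_mul_of_nonneg_left ?_ (rho_nonneg D k)
          exact le_trans (Gk_anti _ (hu0nn k)) (le_of_lt (hN k))
        calc ∑ k, D.rho k * Gk (D.Γ k) u0
            ≤ ∑ k, D.rho k * (2 * ∑ j, D.rho j)⁻¹ := Finset.sum_le_sum fun k _ => hstep k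
          _ = (∑ k, D.rho k) * (2 * ∑ j, D.rho j)⁻¹ := by rw [← Finset.sum_mul]
          _ < 1 := by
              rw [mul_inv, ← mul_assoc]
              have h2 : (∑ k, D.rho k) * (2:ℝ)⁻¹ * (∑ j, D.rho j)⁻¹
                  = (2:ℝ)⁻¹ * ((∑ k, D.rho k) * (∑ j, D.rho j)⁻¹) := by ring
              rw [h2, mul_inv_cancel₀ (by linarith : (∑ j, D.rho j) ≠ 0)]
              norm_num
      refine ⟨u0, fun u hu => ?_⟩
      obtain ⟨hunn, huge⟩ := hu
      by_contra hgt
      push_neg at hgt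
      have : ∑ k, D.rho k * Gk (D.Γ k) u ≤ ∑ k, D.rho k * Gk (D.Γ k) u0 :=
        Finset.sum_le_sum fun k _ =>
          mul_le_mul_of_nonneg_left (Gk_anti _ hgt.le) (rho_nonneg D k)
      linarith
    exact le_csSup hbddU ⟨hW0, hSone.ge⟩
  · -- the measure identity
    intro k
    have hfmeas : Measurable (fun up : ℝ × ℝ => (wMeas ϑ - up.1, up.2 - up.1)) :=
      (measurable_const.sub measurable_fst).prodMk (measurable_snd.sub measurable_fst)
    have hθap : ∀ B : Set (ℝ × ℝ), MeasurableSet B → thetaW D (wMeas ϑ) k B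
        = ENNReal.ofReal (D.lam k) *
          ∫⁻ u in Ioo 0 (wMeas ϑ), D.Γ k {p : ℝ | u ≤ p ∧ (wMeas ϑ - u, p - u) ∈ B} := by
      intro B hB
      rw [thetaW, Measure.smul_apply, smul_eq_mul]
      congr 1
      rw [Measure.map_apply hfmeas hB, Measure.restrict_apply (hfmeas hB),
        Measure.prod_apply ((hfmeas hB).inter
          (measurableSet_le measurable_fst measurable_snd))]
      refine lintegral_congr fun u => ?_
      congr 1
      ext p
      simp only [mem_preimage, mem_inter_iff, mem_setOf_eq]
      exact and_comm
    have hTQ : thetaW D (wMeas ϑ) k Qᶜ = 0 := by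
      rw [hθap _ measurableSet_Q.compl]
      have hv : ∀ u ∈ Ioo (0:ℝ) (wMeas ϑ),
          D.Γ k {p : ℝ | u ≤ p ∧ (wMeas ϑ - u, p - u) ∈ Qᶜ} = 0 := by
        intro u hu
        convert measure_empty (μ := D.Γ k)
        ext p
        simp only [mem_setOf_eq, mem_compl_iff, mem_empty_iff_false, iff_false, not_and]
        intro hup hQ'
        exact hQ' ⟨show (0:ℝ) ≤ wMeas ϑ - u by linarith [hu.2],
          show (0:ℝ) ≤ p - u by linarith⟩
      rw [setLIntegral_congr_fun measurableSet_Ioo (fun u hu => hv u hu), lintegral_zero, mul_zero]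
    have hkey : ∀ B : Set (ℝ × ℝ), MeasurableSet B → B ⊆ Q →
        ϑ k B = thetaW D (wMeas ϑ) k B := by
      intro B hB hBQ
      have ht : (0:ℝ) ≤ wMeas ϑ + 1 := by linarith
      obtain ⟨hint, heq⟩ := hform k B hBQ hB (wMeas ϑ + 1) ht
      rw [hinv _ ht k] at heq
      have h1 : ϑ k (shiftd B (wMeas ϑ + 1)) = 0 := by
        refine measure_mono_null (fun y hy => ?_) (hzero (wMeas ϑ + 1) (by linarith) k)
        obtain ⟨⟨hy1, hy2⟩, hyB⟩ := hy
        have hq1 : 0 ≤ y.1 - (wMeas ϑ + 1) := (hBQ hyB).1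
        exact ⟨show wMeas ϑ + 1 ≤ y.1 by linarith, hy2⟩
      have hcg : EqOn (fun s => kern (D.Γ k) (w s) (shiftd B (wMeas ϑ + 1 - s)))
          (fun s => kern (D.Γ k) (wMeas ϑ) (shiftd B (wMeas ϑ + 1 - s)))
          (uIcc 0 (wMeas ϑ + 1)) := by
        intro s hs
        rw [uIcc_of_le ht] at hs
        simp only
        rw [hconst s hs.1]
      have hint2 : IntervalIntegrable
          (fun s => kern (D.Γ k) (wMeas ϑ) (shiftd B (wMeas ϑ + 1 - s)))
          volume 0 (wMeas ϑ + 1) := by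
        rw [intervalIntegrable_iff, uIoc_of_le ht] at hint ⊢
        refine hint.congr ?_
        refine (ae_restrict_iff' measurableSet_Ioc).mpr (ae_of_all _ fun s hs => ?_)
        exact hcg (by rw [uIcc_of_le ht]; exact Ioc_subset_Icc_self hs)
      have hIeq : (∫ s in (0:ℝ)..(wMeas ϑ + 1),
            kern (D.Γ k) (w s) (shiftd B (wMeas ϑ + 1 - s)))
          = ∫ u in (0:ℝ)..(wMeas ϑ + 1), kern (D.Γ k) (wMeas ϑ) (shiftd B u) := by
        rw [intervalIntegral.integral_congr hcg,
          intervalIntegral.integral_comp_sub_left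
            (fun u => kern (D.Γ k) (wMeas ϑ) (shiftd B u)) (wMeas ϑ + 1)]
        norm_num
      have hFint : IntervalIntegrable (fun u => kern (D.Γ k) (wMeas ϑ) (shiftd B u))
          volume 0 (wMeas ϑ + 1) := by
        have h2 := hint2.comp_sub_left (wMeas ϑ + 1)
        simp only [sub_sub_cancel, sub_self, sub_zero] at h2
        exact h2.symm
      rw [h1, zero_add, hIeq] at heq
      have hdel : deltaPlus (wMeas ϑ) = Measure.dirac (wMeas ϑ) := by
        rw [deltaPlus, if_pos hWpos]
      have hshiftmeas : ∀ u : ℝ, MeasurableSet (shiftd B u) := by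
        intro u
        have he : shiftd B u = Q ∩ ((fun y : ℝ × ℝ => (y.1 - u, y.2 - u)) ⁻¹' B) := rfl
        rw [he]
        exact measurableSet_Q.inter
          (((measurable_fst.sub measurable_const).prodMk
            (measurable_snd.sub measurable_const)) hB)
      have hIint : IntegrableOn (fun u => kern (D.Γ k) (wMeas ϑ) (shiftd B u))
          (Ioc 0 (wMeas ϑ + 1)) volume := by
        rw [intervalIntegrable_iff, uIoc_of_le ht] at hFint
        exact hFint
      have h2 : ENNReal.ofReal (D.lam k * ∫ u in (0:ℝ)..(wMeas ϑ + 1),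
            kern (D.Γ k) (wMeas ϑ) (shiftd B u))
          = ENNReal.ofReal (D.lam k) * ∫⁻ u in Ioc 0 (wMeas ϑ + 1),
            ((Measure.dirac (wMeas ϑ)).prod (D.Γ k)) (shiftd B u) := by
        rw [ENNReal.ofReal_mul (D.lam_pos k).le]
        congr 1
        rw [intervalIntegral.integral_of_le ht,
          ofReal_integral_eq_lintegral_ofReal hIint
            (ae_of_all _ fun u => ENNReal.toReal_nonneg)]
        refine lintegral_congr fun u => ?_
        rw [kern, hdel, ENNReal.ofReal_toReal (measure_ne_top _ _)]
      have h3 : (∫⁻ u in Ioc 0 (wMeas ϑ + 1),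
            ((Measure.dirac (wMeas ϑ)).prod (D.Γ k)) (shiftd B u))
          = ∫⁻ u in Ioo 0 (wMeas ϑ),
            D.Γ k {p : ℝ | u ≤ p ∧ (wMeas ϑ - u, p - u) ∈ B} := by
        have hsplit : Ioc (0:ℝ) (wMeas ϑ + 1)
            = Ioo 0 (wMeas ϑ) ∪ Icc (wMeas ϑ) (wMeas ϑ + 1) := by
          ext u
          simp only [mem_Ioc, mem_union, mem_Ioo, mem_Icc]
          constructor
          · rintro ⟨h1', h2'⟩
            rcases lt_or_ge u (wMeas ϑ) with h | h
            · exact Or.inl ⟨h1', h⟩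
            · exact Or.inr ⟨h, h2'⟩
          · rintro (⟨h1', h2'⟩ | ⟨h1', h2'⟩)
            · exact ⟨h1', by linarith⟩
            · exact ⟨by linarith, h2'⟩
        have hdisj : Disjoint (Ioo (0:ℝ) (wMeas ϑ)) (Icc (wMeas ϑ) (wMeas ϑ + 1)) := by
          rw [Set.disjoint_left]
          rintro u ⟨_, hu2⟩ ⟨hu3, _⟩
          exact absurd hu3 (not_le.mpr hu2)
        rw [hsplit, lintegral_union measurableSet_Icc hdisj]
        have hz : ∫⁻ u in Icc (wMeas ϑ) (wMeas ϑ + 1),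
            ((Measure.dirac (wMeas ϑ)).prod (D.Γ k)) (shiftd B u) = 0 := by
          rw [setLIntegral_congr
            (Ioc_ae_eq_Icc (μ := volume) (a := wMeas ϑ) (b := wMeas ϑ + 1)).symm]
          have hv : ∀ u ∈ Ioc (wMeas ϑ) (wMeas ϑ + 1),
              ((Measure.dirac (wMeas ϑ)).prod (D.Γ k)) (shiftd B u) = (0:ℝ≥0∞) := by
            intro u hu
            have hsub : shiftd B u ⊆ Ici u ×ˢ (univ : Set ℝ) := by
              rintro y ⟨hyQ, hyB⟩
              have hy1 : 0 ≤ y.1 - u := (hBQ hyB).1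
              exact ⟨show u ≤ y.1 by linarith, trivial⟩
            refine measure_mono_null hsub ?_
            rw [Measure.prod_prod, Measure.dirac_apply' _ measurableSet_Ici,
              indicator_of_notMem (by simp only [mem_Ici, not_le]; exact hu.1)]
            simp
          rw [setLIntegral_congr_fun measurableSet_Ioc (fun u hu => hv u hu), lintegral_zero]
        rw [hz, add_zero]
        refine setLIntegral_congr_fun measurableSet_Ioo (fun u hu => ?_)
        beta_reduce
        rw [Measure.dirac_prod, Measure.map_apply measurable_prodMk_left (hshiftmeas u)]
        congr 1
        ext p
        simp only [mem_preimage, shiftd, shift, Q, mem_setOf_eq]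
        constructor
        · rintro ⟨⟨_, hp⟩, hB'⟩
          have h2' : 0 ≤ p - u := (hBQ hB').2
          exact ⟨show u ≤ p by linarith, hB'⟩
        · rintro ⟨hup, hB'⟩
          exact ⟨⟨hW0, show (0:ℝ) ≤ p by linarith [hu.1]⟩, hB'⟩
      rw [heq, h2, h3, hθap B hB]
    refine Measure.ext fun s hs => ?_
    have e1 : ϑ k s = ϑ k (s ∩ Q) := by
      conv_lhs => rw [← measure_inter_add_diff s measurableSet_Q]
      have hd : ϑ k (s \ Q) = 0 := measure_mono_null (fun y hy => hy.2) (hQc k)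
      rw [hd, add_zero]
    have e2 : thetaW D (wMeas ϑ) k s = thetaW D (wMeas ϑ) k (s ∩ Q) := by
      conv_lhs => rw [← measure_inter_add_diff s measurableSet_Q]
      have hd : thetaW D (wMeas ϑ) k (s \ Q) = 0 :=
        measure_mono_null (fun y hy => hy.2) hTQ
      rw [hd, add_zero]
    rw [e1, e2]
    exact hkey (s ∩ Q) (hs.inter measurableSet_Q) inter_subset_right

end OverloadedFIFO
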